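/- arXiv:2602.06894 — 4 statements merged into one kernel-verified Lean document; each statement's English description precedes it below -/
import Mathlib

section
/- Let S = {(2ⁿ, 4ⁿ) : n ∈ ℕ, n ≠ 1} ⊆ ℝ². Then for every real number β ≤ 3, the point (3/2, β) does not belong to the closure of the convex hull of S in ℝ². -/
/-- For every `β ≤ 3`, the point `(3/2, β)` does not lie in the closed convex hull of
the set `{(2ⁿ, 4ⁿ) : n ∈ ℕ, n ≠ 1} ⊆ ℝ²`. -/
theorem point_not_in_closed_convex_hull :
    ∀ β : ℝ, β ≤ 3 →
      ((3 / 2 : ℝ), β) ∉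
        closure (convexHull ℝ
          {p : ℝ × ℝ | ∃ n : ℕ, n ≠ 1 ∧ p = ((2 : ℝ) ^ n, (4 : ℝ) ^ n)}) := by
  intro β hβ hmem
  have hsub : closure (convexHull ℝ
      {p : ℝ × ℝ | ∃ n : ℕ, n ≠ 1 ∧ p = ((2 : ℝ) ^ n, (4 : ℝ) ^ n)}) ⊆
      {p : ℝ × ℝ | 5 * p.1 - p.2 ≤ 4} := by
    apply closure_minimal
    · apply convexHull_min
      · rintro p ⟨n, hn, rfl⟩
        simp only [Set.mem_setOf_eq]
        have h4 : (4 : ℝ) ^ n = (2 : ℝ) ^ n * (2 : ℝ) ^ n := by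
          rw [← mul_pow]; norm_num
        rw [h4]
        rcases Nat.lt_or_ge n 2 with h | h
        · interval_cases n
          · norm_num
          · exact absurd rfl hn
        · have h1 : (4 : ℝ) ≤ 2 ^ n := by
            calc (4 : ℝ) = 2 ^ 2 := by norm_num
            _ ≤ 2 ^ n := pow_le_pow_right₀ (by norm_num) h
          nlinarith
      · intro p hp q hq a b ha hb hab
        simp only [Set.mem_setOf_eq] at *
        have h1 : (a • p + b • q).1 = a * p.1 + b * q.1 := rfl
        have h2 : (a • p + b • q).2 = a * p.2 + b * q.2 := rfl
        rw [h1, h2]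
        nlinarith
    · exact isClosed_le (by fun_prop) (by fun_prop)
  have := hsub hmem
  simp only [Set.mem_setOf_eq] at this
  linarith
end

section
/- Let p : ℕ → ℝ satisfy p(n) ≥ 0 for all n and p(1) = 0. Suppose p is summable with ∑ₙ p(n) = 1, the function n ↦ p(n)·2ⁿ is summable with ∑ₙ p(n)·2ⁿ = 3/2, and the function n ↦ p(n)·4ⁿ is summable. Then ∑ₙ p(n)·4ⁿ ≥ 7/2 (in particular this sum is strictly greater than 3). -/
/-- If `p : ℕ → ℝ` is a nonnegative summable sequence with `p 1 = 0`, total sum `1`,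
first moment `∑ p n * 2ⁿ = 3/2`, and summable second moment `∑ p n * 4ⁿ`, then the
second moment is at least `7/2`. -/
theorem second_moment_ge_of_mean_three_halves (p : ℕ → ℝ)
    (hp : ∀ n, 0 ≤ p n) (hp1 : p 1 = 0)
    (hsum : Summable p) (htotal : ∑' n, p n = 1)
    (hsum2 : Summable fun n => p n * 2 ^ n) (hmean : ∑' n, p n * 2 ^ n = 3 / 2)
    (hsum4 : Summable fun n => p n * 4 ^ n) :
    (7 : ℝ) / 2 ≤ ∑' n, p n * 4 ^ n := by
  have hf : Summable (fun n => 5 * (p n * 2 ^ n) - 4 * p n) :=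
    ((hsum2.mul_left 5).sub (hsum.mul_left 4))
  have hle : ∀ n, 5 * (p n * 2 ^ n) - 4 * p n ≤ p n * 4 ^ n := by
    intro n
    rcases eq_or_ne n 1 with rfl | hn
    · simp [hp1]
    · have key : (5 : ℝ) * 2 ^ n - 4 ≤ 4 ^ n := by
        rcases Nat.lt_or_ge n 2 with h | h
        · interval_cases n <;> simp_all <;> norm_num
        · have h2 : (4 : ℝ) ≤ 2 ^ n := by
            calc (4 : ℝ) = 2 ^ 2 := by norm_num
            _ ≤ 2 ^ n := by apply pow_le_pow_right₀ (by norm_num) h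
          have h1 : (1 : ℝ) ≤ 2 ^ n := one_le_pow₀ (by norm_num)
          have : (0:ℝ) ≤ (2 ^ n - 1) * (2 ^ n - 4) := by nlinarith
          have h4 : (4:ℝ) ^ n = (2 ^ n) * (2 ^ n) := by
            rw [← mul_pow]; norm_num
          nlinarith
      nlinarith [hp n, mul_le_mul_of_nonneg_left key (hp n)]
  have := Summable.tsum_le_tsum hle hf hsum4
  calc (7:ℝ)/2 = 5 * (3/2) - 4 * 1 := by norm_num
    _ = ∑' n, (5 * (p n * 2 ^ n) - 4 * p n) := by
        rw [Summable.tsum_sub (hsum2.mul_left 5) (hsum.mul_left 4),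
          tsum_mul_left, tsum_mul_left, hmean, htotal]
    _ ≤ _ := this
end

section
/- Let p : ℕ → ℝ satisfy p(n) ≥ 0 for all n, p(1) = 0 and p(2) = 0. Suppose p is summable with ∑ₙ p(n) = 1, the function n ↦ p(n)·2ⁿ is summable with ∑ₙ p(n)·2ⁿ = 2, and the function n ↦ p(n)·4ⁿ is summable. Then ∑ₙ p(n)·4ⁿ ≥ 10 (in particular this sum is strictly greater than 6). -/
/-- If `p : ℕ → ℝ` is a nonnegative summable sequence with `p 1 = 0`, `p 2 = 0`,
total sum `1`, first moment `∑ p n * 2ⁿ = 2`, and summable second moment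
`∑ p n * 4ⁿ`, then the second moment is at least `10`. -/
theorem second_moment_ge_of_mean_two (p : ℕ → ℝ)
    (hp : ∀ n, 0 ≤ p n) (hp1 : p 1 = 0) (hp2 : p 2 = 0)
    (hsum : Summable p) (htotal : ∑' n, p n = 1)
    (hsum2 : Summable fun n => p n * 2 ^ n) (hmean : ∑' n, p n * 2 ^ n = 2)
    (hsum4 : Summable fun n => p n * 4 ^ n) :
    (10 : ℝ) ≤ ∑' n, p n * 4 ^ n := by
  have key : ∀ n, 9 * (p n * 2 ^ n) - 8 * p n ≤ p n * 4 ^ n := by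
    intro n
    match n with
    | 0 => norm_num; linarith [hp 0]
    | 1 => simp [hp1]
    | 2 => simp [hp2]
    | (m+3) =>
      have h8 : (8 : ℝ) ≤ 2 ^ (m+3) := by
        calc (8:ℝ) = 2 ^ 3 := by norm_num
        _ ≤ 2 ^ (m+3) := by
          apply pow_le_pow_right₀ (by norm_num); omega
      have h4 : (4:ℝ) ^ (m+3) = (2 ^ (m+3)) * (2 ^ (m+3)) := by
        rw [← mul_pow]; norm_num
      nlinarith [hp (m+3), mul_nonneg (hp (m+3)) (sub_nonneg.mpr h8)]
  have hq : Summable fun n => 9 * (p n * 2 ^ n) - 8 * p n :=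
    (hsum2.mul_left 9).sub (hsum.mul_left 8)
  have := Summable.tsum_le_tsum key hq hsum4
  rw [Summable.tsum_sub (hsum2.mul_left 9) (hsum.mul_left 8), tsum_mul_left, tsum_mul_left,
    htotal, hmean] at this
  linarith
end

section
/- Let T = {(2ⁿ, 4ⁿ) : n ∈ ℕ, n ≠ 1, n ≠ 2} ⊆ ℝ². Then for every real number β ≤ 6, the point (2, β) does not belong to the closure of the convex hull of T in ℝ². -/
/-- For every `β ≤ 6`, the point `(2, β)` does not lie in the closed convex hull of
the set `{(2ⁿ, 4ⁿ) : n ∈ ℕ, n ∉ {1, 2}} ⊆ ℝ²`. -/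
theorem point_not_in_closed_convex_hull' :
    ∀ β : ℝ, β ≤ 6 →
      ((2 : ℝ), β) ∉
        closure (convexHull ℝ
          {p : ℝ × ℝ | ∃ n : ℕ, n ≠ 1 ∧ n ≠ 2 ∧ p = ((2 : ℝ) ^ n, (4 : ℝ) ^ n)}) := by
  intro β hβ h
  have hsub : closure (convexHull ℝ
      {p : ℝ × ℝ | ∃ n : ℕ, n ≠ 1 ∧ n ≠ 2 ∧ p = ((2 : ℝ) ^ n, (4 : ℝ) ^ n)}) ⊆
      {p : ℝ × ℝ | 9 * p.1 ≤ p.2 + 8} := by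
    apply closure_minimal
    · apply convexHull_min
      · rintro p ⟨n, h1, h2, rfl⟩
        simp only [Set.mem_setOf_eq]
        rcases Nat.lt_or_ge n 3 with hn | hn
        · interval_cases n
          · norm_num
          · exact absurd rfl h1
          · exact absurd rfl h2
        · have hx : (8 : ℝ) ≤ 2 ^ n := by
            calc (8 : ℝ) = 2 ^ 3 := by norm_num
            _ ≤ 2 ^ n := by
              apply pow_le_pow_right₀ (by norm_num) hn
          have h4 : (4 : ℝ) ^ n = (2 ^ n) ^ 2 := by
            rw [← pow_mul, pow_mul']
            norm_num
          rw [h4]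
          nlinarith [sq_nonneg ((2 : ℝ) ^ n - 8)]
      · have : Convex ℝ {p : ℝ × ℝ | 9 * p.1 ≤ p.2 + 8} := by
          have := convex_halfSpace_le
            (LinearMap.isLinear ((9 : ℝ) • LinearMap.fst ℝ ℝ ℝ - LinearMap.snd ℝ ℝ ℝ)) (8 : ℝ)
          convert this using 1
          ext p
          simp only [Set.mem_setOf_eq, LinearMap.sub_apply, LinearMap.smul_apply,
            LinearMap.fst_apply, LinearMap.snd_apply, smul_eq_mul]
          constructor <;> intro <;> linarith
          ext p
          simp only [Set.mem_setOf_eq, LinearMap.sub_apply, LinearMap.smul_apply,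
            LinearMap.fst_apply, LinearMap.snd_apply, smul_eq_mul]
          constructor <;> intro <;> linarith
        exact this
    · have : IsClosed {p : ℝ × ℝ | 9 * p.1 - p.2 ≤ 8} :=
        isClosed_le (by continuity) continuous_const
      convert this using 1
      ext p
      simp only [Set.mem_setOf_eq]
      constructor <;> intro <;> linarith
  have := hsub h
  simp only [Set.mem_setOf_eq] at this
  linarith
end
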